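/- Fix σ > 1 and define φ_σ(t) = t^{σ/(σ−1)} / W(t)^{1/(σ−1)} for t > 0, φ_σ(0) = 0, where W is the principal branch of the Lambert W function. For each τ > 0 let T_{τ,σ}(k) = sup_{p∈ℕ} ln_+(k^p / p^{τ p^σ}). Then there exist constants A, B > 0 and Ã, B̃ ∈ ℝ such that B·φ_σ(ln_+ k) + B̃ ≤ T_{τ,σ}(k) ≤ A·φ_σ(ln_+ k) + Ã for all k > 0. -/

import Mathlib

open Real
set_option maxHeartbeats 1000000

noncomputable def bet (σ τ : ℝ) : ℝ := max 1 (((σ-1)/τ) ^ (1/(σ-1)))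
noncomputable def alp (σ τ : ℝ) : ℝ := min 1 (((σ-1)/((2:ℝ)^(σ+1)*τ)) ^ (1/(σ-1)))

lemma bet_one_le (σ τ : ℝ) : 1 ≤ bet σ τ := le_max_left _ _

lemma bet_pow (σ τ : ℝ) (hσ : 1 < σ) (hτ : 0 < τ) : (σ-1)/τ ≤ (bet σ τ) ^ (σ-1) := by
  have hσ' : (0:ℝ) < σ - 1 := by linarith
  have hb : (((σ-1)/τ) ^ (1/(σ-1))) ^ (σ-1) = (σ-1)/τ := by
    rw [← Real.rpow_mul (by positivity), one_div_mul_cancel (ne_of_gt hσ'), Real.rpow_one]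
  calc (σ-1)/τ = (((σ-1)/τ) ^ (1/(σ-1))) ^ (σ-1) := hb.symm
    _ ≤ (bet σ τ) ^ (σ-1) := Real.rpow_le_rpow (by positivity) (le_max_right _ _) hσ'.le

lemma alp_pos (σ τ : ℝ) (hσ : 1 < σ) (hτ : 0 < τ) : 0 < alp σ τ := by
  have hσ' : (0:ℝ) < σ - 1 := by linarith
  have : (0:ℝ) < ((σ-1)/((2:ℝ)^(σ+1)*τ)) ^ (1/(σ-1)) := by positivity
  exact lt_min one_pos this

lemma alp_le_one (σ τ : ℝ) : alp σ τ ≤ 1 := min_le_left _ _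

lemma alp_pow (σ τ : ℝ) (hσ : 1 < σ) (hτ : 0 < τ) :
    (alp σ τ) ^ (σ-1) ≤ (σ-1)/((2:ℝ)^(σ+1)*τ) := by
  have hσ' : (0:ℝ) < σ - 1 := by linarith
  have hb : (((σ-1)/((2:ℝ)^(σ+1)*τ)) ^ (1/(σ-1))) ^ (σ-1) = (σ-1)/((2:ℝ)^(σ+1)*τ) := by
    rw [← Real.rpow_mul (by positivity), one_div_mul_cancel (ne_of_gt hσ'), Real.rpow_one]
  calc (alp σ τ) ^ (σ-1) ≤ (((σ-1)/((2:ℝ)^(σ+1)*τ)) ^ (1/(σ-1))) ^ (σ-1) :=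
        Real.rpow_le_rpow (alp_pos σ τ hσ hτ).le (min_le_right _ _) hσ'.le
    _ = _ := hb

lemma aux_upper (σ τ : ℝ) (hσ : 1 < σ) (hτ : 0 < τ) (t s : ℝ)
    (ht : 0 < t) (hs : 0 < s) (hst : s * Real.exp s = t) (p : ℕ) :
    (p:ℝ) * t - τ * (p:ℝ) ^ σ * Real.log p ≤ bet σ τ * (t * Real.exp (s/(σ-1))) := by
  have hσ' : (0:ℝ) < σ - 1 := by linarith
  have hβ1 : (1:ℝ) ≤ bet σ τ := bet_one_le σ τ
  have hRHS : 0 ≤ bet σ τ * (t * Real.exp (s/(σ-1))) := by positivity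
  rcases Nat.eq_zero_or_pos p with hp | hp
  · subst hp
    simp [Real.zero_rpow (by positivity : σ ≠ 0)]
    exact hRHS
  have hP1 : (1:ℝ) ≤ (p:ℝ) := by exact_mod_cast hp
  have hP0 : (0:ℝ) < (p:ℝ) := by linarith
  have hlogP : 0 ≤ Real.log p := Real.log_nonneg hP1
  by_cases hc : (p:ℝ) ≤ bet σ τ * Real.exp (s/(σ-1))
  · have h1 : (p:ℝ) * t - τ * (p:ℝ) ^ σ * Real.log p ≤ (p:ℝ) * t := by
      have : 0 ≤ τ * (p:ℝ) ^ σ * Real.log p := by positivity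
      linarith
    calc (p:ℝ) * t - τ * (p:ℝ) ^ σ * Real.log p ≤ (p:ℝ) * t := h1
      _ ≤ (bet σ τ * Real.exp (s/(σ-1))) * t := mul_le_mul_of_nonneg_right hc ht.le
      _ = bet σ τ * (t * Real.exp (s/(σ-1))) := by ring
  · push_neg at hc
    -- show LHS ≤ 0
    have hβpos : (0:ℝ) < bet σ τ := by linarith
    have hce : Real.exp (s/(σ-1)) ≤ (p:ℝ) := by
      calc Real.exp (s/(σ-1)) = 1 * Real.exp (s/(σ-1)) := by ring
        _ ≤ bet σ τ * Real.exp (s/(σ-1)) := by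
            exact mul_le_mul_of_nonneg_right hβ1 (Real.exp_pos _).le
        _ ≤ (p:ℝ) := hc.le
    have hlog2 : s/(σ-1) ≤ Real.log p := by
      have := Real.log_le_log (Real.exp_pos _) hce
      rwa [Real.log_exp] at this
    have hpow : bet σ τ ^ (σ-1) * Real.exp s ≤ (p:ℝ) ^ (σ-1) := by
      have h1 : (bet σ τ * Real.exp (s/(σ-1))) ^ (σ-1) ≤ (p:ℝ) ^ (σ-1) :=
        Real.rpow_le_rpow (by positivity) hc.le hσ'.le
      rwa [Real.mul_rpow (by positivity) (Real.exp_pos _).le,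
        Real.rpow_def_of_pos (Real.exp_pos _), Real.log_exp,
        div_mul_cancel₀ _ (ne_of_gt hσ')] at h1
    have hkey : t ≤ τ * ((p:ℝ) ^ (σ-1) * Real.log p) := by
      have h2 : bet σ τ ^ (σ-1) * Real.exp s * (s/(σ-1)) ≤ (p:ℝ) ^ (σ-1) * Real.log p :=
        mul_le_mul hpow hlog2 (by positivity) (by positivity)
      have h3 : (σ-1)/τ * (Real.exp s * (s/(σ-1))) ≤ bet σ τ ^ (σ-1) * (Real.exp s * (s/(σ-1))) :=
        mul_le_mul_of_nonneg_right (bet_pow σ τ hσ hτ) (by positivity)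
      have h4 : (σ-1)/τ * (Real.exp s * (s/(σ-1))) = t/τ := by
        rw [← hst]; field_simp
      have h5 : t/τ ≤ (p:ℝ) ^ (σ-1) * Real.log p := by
        calc t/τ = (σ-1)/τ * (Real.exp s * (s/(σ-1))) := h4.symm
          _ ≤ bet σ τ ^ (σ-1) * (Real.exp s * (s/(σ-1))) := h3
          _ = bet σ τ ^ (σ-1) * Real.exp s * (s/(σ-1)) := by ring
          _ ≤ (p:ℝ) ^ (σ-1) * Real.log p := h2
      calc t = τ * (t/τ) := by field_simp
        _ ≤ τ * ((p:ℝ) ^ (σ-1) * Real.log p) := mul_le_mul_of_nonneg_left h5 hτ.le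
    have hPσ : (p:ℝ) ^ σ = (p:ℝ) * (p:ℝ) ^ (σ-1) := by
      rw [show σ = 1 + (σ-1) by ring, Real.rpow_add hP0, Real.rpow_one]
      ring_nf
    have : (p:ℝ) * t ≤ τ * (p:ℝ) ^ σ * Real.log p := by
      rw [hPσ]
      calc (p:ℝ) * t ≤ (p:ℝ) * (τ * ((p:ℝ) ^ (σ-1) * Real.log p)) :=
            mul_le_mul_of_nonneg_left hkey hP0.le
        _ = τ * ((p:ℝ) * (p:ℝ) ^ (σ-1)) * Real.log p := by ring
    linarith

lemma aux_lower (σ τ : ℝ) (hσ : 1 < σ) (hτ : 0 < τ) (t s : ℝ)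
    (ht : 0 < t) (hs : 0 < s) (hst : s * Real.exp s = t)
    (α : ℝ) (hα0 : 0 < α) (hα1 : α ≤ 1)
    (hαpow : α ^ (σ-1) ≤ (σ-1)/((2:ℝ)^(σ+1)*τ))
    (hs0 : (σ-1) * Real.log (1/α) ≤ s)
    (hs1 : 4*τ*(2:ℝ)^(σ:ℝ)*Real.log 2 ≤ s) :
    ∃ p : ℕ, α / 4 * (t * Real.exp (s/(σ-1))) ≤ (p:ℝ) * t - τ * (p:ℝ) ^ σ * Real.log p := by
  have hσ' : (0:ℝ) < σ - 1 := by linarith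
  set x : ℝ := α * Real.exp (s/(σ-1)) with hxdef
  have hx0 : 0 < x := by positivity
  have hx1 : 1 ≤ x := by
    have h1 : Real.log (1/α) ≤ s/(σ-1) := by
      rw [le_div_iff₀ hσ']
      calc Real.log (1/α) * (σ-1) = (σ-1) * Real.log (1/α) := by ring
        _ ≤ s := hs0
    have h2 : 1/α ≤ Real.exp (s/(σ-1)) := by
      calc 1/α = Real.exp (Real.log (1/α)) := (Real.exp_log (by positivity)).symm
        _ ≤ Real.exp (s/(σ-1)) := Real.exp_le_exp.2 h1
    calc (1:ℝ) = α * (1/α) := by field_simp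
      _ ≤ α * Real.exp (s/(σ-1)) := mul_le_mul_of_nonneg_left h2 hα0.le
  refine ⟨⌈x⌉₊, ?_⟩
  set p : ℕ := ⌈x⌉₊ with hpdef
  have hPx : x ≤ (p:ℝ) := Nat.le_ceil x
  have hP2x : (p:ℝ) ≤ 2*x := by
    have := Nat.ceil_lt_add_one hx0.le
    linarith
  have hP1 : (1:ℝ) ≤ (p:ℝ) := le_trans hx1 hPx
  have hP0 : (0:ℝ) < (p:ℝ) := by linarith
  have hlogP0 : 0 ≤ Real.log p := Real.log_nonneg hP1
  -- log bound
  have hlog2x : Real.log (2*x) ≤ Real.log 2 + s/(σ-1) := by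
    rw [hxdef, ← mul_assoc, Real.log_mul (by positivity) (Real.exp_pos _).ne', Real.log_exp,
      Real.log_mul (by norm_num) hα0.ne']
    have : Real.log α ≤ 0 := Real.log_nonpos hα0.le hα1
    linarith
  have hlogP : Real.log p ≤ Real.log 2 + s/(σ-1) :=
    le_trans (Real.log_le_log hP0 hP2x) hlog2x
  have hlog2pos : (0:ℝ) ≤ Real.log 2 + s/(σ-1) := le_trans hlogP0 hlogP
  have hpowP : (p:ℝ) ^ σ ≤ (2*x) ^ σ := Real.rpow_le_rpow hP0.le hP2x (by linarith)
  -- main term bound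
  have hsub : τ * (p:ℝ) ^ σ * Real.log p ≤ τ * (2*x) ^ σ * (Real.log 2 + s/(σ-1)) := by
    have h1 : (p:ℝ) ^ σ * Real.log p ≤ (2*x) ^ σ * (Real.log 2 + s/(σ-1)) :=
      mul_le_mul hpowP hlogP hlogP0 (by positivity)
    calc τ * (p:ℝ) ^ σ * Real.log p = τ * ((p:ℝ) ^ σ * Real.log p) := by ring
      _ ≤ τ * ((2*x) ^ σ * (Real.log 2 + s/(σ-1))) := mul_le_mul_of_nonneg_left h1 hτ.le
      _ = τ * (2*x) ^ σ * (Real.log 2 + s/(σ-1)) := by ring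
  set E : ℝ := Real.exp s * Real.exp (s/(σ-1)) with hEdef
  have hE0 : 0 < E := by positivity
  set c1 : ℝ := τ * (2:ℝ)^(σ:ℝ) * α ^ (σ-1) with hc1def
  have hc1_0 : 0 < c1 := by positivity
  -- identity: τ * (2x)^σ = c1 * α * E
  have hexpσ : (Real.exp (s/(σ-1))) ^ σ = E := by
    rw [Real.rpow_def_of_pos (Real.exp_pos _), Real.log_exp, hEdef, ← Real.exp_add]
    congr 1
    field_simp
    ring
  have hασ : α ^ σ = α ^ (σ-1) * α := by
    have h := Real.rpow_add hα0 (σ-1) 1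
    rw [Real.rpow_one, show σ-1+1 = σ by ring] at h
    exact h
  have hid : τ * (2*x) ^ σ = c1 * α * E := by
    rw [hxdef, show (2:ℝ) * (α * Real.exp (s/(σ-1))) = (2*α) * Real.exp (s/(σ-1)) by ring,
      Real.mul_rpow (by positivity) (Real.exp_pos _).le, hexpσ,
      Real.mul_rpow (by norm_num) hα0.le, hασ, hc1def]
    ring
  -- c1 bounds
  have h2σ1 : (2:ℝ)^(σ+1) = 2 * (2:ℝ)^(σ:ℝ) := by
    rw [Real.rpow_add (by norm_num : (0:ℝ) < 2), Real.rpow_one]; ring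
  have hc1half : c1 ≤ (σ-1)/2 := by
    have := mul_le_mul_of_nonneg_left hαpow (by positivity : (0:ℝ) ≤ τ * (2:ℝ)^(σ:ℝ))
    have h2pos : (0:ℝ) < (2:ℝ)^(σ:ℝ) := by positivity
    rw [hc1def]
    calc τ * (2:ℝ)^(σ:ℝ) * α ^ (σ-1) ≤ τ * (2:ℝ)^(σ:ℝ) * ((σ-1)/((2:ℝ)^(σ+1)*τ)) := this
      _ = (σ-1)/2 := by
          have hgen : ∀ b : ℝ, 0 < b → τ * b * ((σ-1)/(2*b*τ)) = (σ-1)/2 := by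
            intro b hb; field_simp
          rw [h2σ1]
          exact hgen _ (by positivity)
  have hα' : α ^ (σ-1) ≤ 1 := Real.rpow_le_one hα0.le hα1 hσ'.le
  have hc1log : c1 * Real.log 2 ≤ s/4 := by
    have hl2 : (0:ℝ) ≤ Real.log 2 := Real.log_nonneg (by norm_num)
    have h1 : c1 ≤ τ * (2:ℝ)^(σ:ℝ) := by
      rw [hc1def]
      nlinarith [hα', (by positivity : (0:ℝ) < τ * (2:ℝ)^(σ:ℝ))]
    nlinarith
  have hc1s : c1 * (s/(σ-1)) ≤ s/2 := by
    have : c1 * (s/(σ-1)) ≤ (σ-1)/2 * (s/(σ-1)) :=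
      mul_le_mul_of_nonneg_right hc1half (by positivity)
    have he : (σ-1)/2 * (s/(σ-1)) = s/2 := by field_simp
    linarith
  -- final computation
  have hxt : x * t = α * s * E := by
    rw [hxdef, ← hst, hEdef]; ring
  have hφ : t * Real.exp (s/(σ-1)) = s * E := by
    rw [← hst, hEdef]; ring
  have hPt : x * t ≤ (p:ℝ) * t := mul_le_mul_of_nonneg_right hPx ht.le
  have hbig : τ * (2*x) ^ σ * (Real.log 2 + s/(σ-1)) ≤ α * E * (3*s/4) := by
    rw [hid]
    have h1 : c1 * (Real.log 2 + s/(σ-1)) ≤ 3*s/4 := by linarith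
    calc c1 * α * E * (Real.log 2 + s/(σ-1)) = (α * E) * (c1 * (Real.log 2 + s/(σ-1))) := by ring
      _ ≤ (α * E) * (3*s/4) := mul_le_mul_of_nonneg_left h1 (by positivity)
      _ = α * E * (3*s/4) := by ring
  calc α / 4 * (t * Real.exp (s/(σ-1))) = α * s * E - α * E * (3*s/4) := by rw [hφ]; ring
    _ ≤ x * t - τ * (2*x) ^ σ * (Real.log 2 + s/(σ-1)) := by rw [hxt]; linarith
    _ ≤ (p:ℝ) * t - τ * (p:ℝ) ^ σ * Real.log p := by linarith


/-- Two-sided estimate of the associated function T_{τ,σ} by φ_σ(ln_+ k), where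
    φ_σ(t) = t^{σ/(σ−1)} / W(t)^{1/(σ−1)}. -/
theorem stmt_14 (W : ℝ → ℝ)
    (hW : ∀ y : ℝ, 0 ≤ y → 0 ≤ W y ∧ W y * Real.exp (W y) = y)
    (σ τ : ℝ) (hσ : 1 < σ) (hτ : 0 < τ)
    (φ : ℝ → ℝ) (hφ0 : φ 0 = 0)
    (hφ : ∀ t : ℝ, 0 < t → φ t = t ^ (σ / (σ - 1)) / (W t) ^ (1 / (σ - 1)))
    (M : ℕ → ℝ) (hM0 : M 0 = 1)
    (hM : ∀ p : ℕ, 1 ≤ p → M p = (p : ℝ) ^ (τ * (p : ℝ) ^ σ))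
    (T : ℝ → ℝ)
    (hT : ∀ k : ℝ, T k = ⨆ p : ℕ, max 0 (Real.log (k ^ p / M p))) :
    ∃ A B : ℝ, 0 < A ∧ 0 < B ∧ ∃ A' B' : ℝ, ∀ k : ℝ, 0 < k →
      B * φ (max 0 (Real.log k)) + B' ≤ T k ∧
      T k ≤ A * φ (max 0 (Real.log k)) + A' := by
  have hσ' : (0:ℝ) < σ - 1 := by linarith
  have hσ0 : σ ≠ 0 := by positivity
  set α : ℝ := alp σ τ with hαdef
  have hα0 : 0 < α := alp_pos σ τ hσ hτ
  have hα1 : α ≤ 1 := alp_le_one σ τ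
  have hαpow : α ^ (σ-1) ≤ (σ-1)/((2:ℝ)^(σ+1)*τ) := alp_pow σ τ hσ hτ
  have hβ1 : (1:ℝ) ≤ bet σ τ := bet_one_le σ τ
  have hβ0 : (0:ℝ) < bet σ τ := lt_of_lt_of_le one_pos hβ1
  set s0 : ℝ := max ((σ-1) * Real.log (1/α)) (4*τ*(2:ℝ)^(σ:ℝ)*Real.log 2) with hs0def
  have hlog2 : (0:ℝ) < Real.log 2 := Real.log_pos (by norm_num)
  have hs0nn : 0 ≤ s0 := le_trans (by positivity) (le_max_right _ _)
  set C0 : ℝ := s0 * Real.exp s0 * Real.exp (s0/(σ-1)) with hC0def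
  have hC0 : 0 ≤ C0 := by positivity
  have hM1 : ∀ p : ℕ, 1 ≤ M p := by
    intro p
    rcases Nat.eq_zero_or_pos p with h | h
    · rw [h, hM0]
    · rw [hM p h]
      have hp1 : (1:ℝ) ≤ (p:ℝ) := by exact_mod_cast h
      exact Real.one_le_rpow hp1 (by positivity)
  have hMpos : ∀ p : ℕ, 0 < M p := fun p => lt_of_lt_of_le one_pos (hM1 p)
  refine ⟨bet σ τ, α/4, hβ0, by positivity, 0, -(α/4*C0), ?_⟩
  intro k hk
  rcases le_or_gt k 1 with hk1 | hk1
  · -- k ≤ 1 : T k = 0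
    have hlk : Real.log k ≤ 0 := Real.log_nonpos hk.le hk1
    have hmax : max 0 (Real.log k) = 0 := max_eq_left hlk
    have hTk : T k = 0 := by
      rw [hT]
      have hz : ∀ p:ℕ, max 0 (Real.log (k^p / M p)) = 0 := by
        intro p
        apply max_eq_left
        apply Real.log_nonpos (div_nonneg (by positivity) (hMpos p).le)
        rw [div_le_one (hMpos p)]
        calc k^p ≤ 1^p := pow_le_pow_left₀ hk.le hk1 p
          _ = 1 := one_pow p
          _ ≤ M p := hM1 p
      simp only [hz]
      exact ciSup_const
    rw [hmax, hφ0, hTk]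
    constructor
    · nlinarith
    · nlinarith
  · -- k > 1
    have ht : 0 < Real.log k := Real.log_pos hk1
    set t : ℝ := Real.log k with htdef
    have hmax : max 0 (Real.log k) = t := max_eq_right ht.le
    obtain ⟨hWnn, hWeq⟩ := hW t ht.le
    set s : ℝ := W t with hsdef
    have hs : 0 < s := by
      rcases hWnn.lt_or_eq with h | h
      · exact h
      · exfalso; rw [← hWeq, ← h] at ht; simp at ht
    have hφt : φ t = t * Real.exp (s/(σ-1)) := by
      rw [hφ t ht]
      have h1 : t ^ (σ/(σ-1)) = t * t^(1/(σ-1)) := by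
        rw [show σ/(σ-1) = 1 + 1/(σ-1) by field_simp; ring, Real.rpow_add ht, Real.rpow_one]
      have hts : t / s = Real.exp s := by
        field_simp [← hWeq]; exact hWeq.symm
      have h2 : t^(1/(σ-1)) / s^(1/(σ-1)) = Real.exp (s/(σ-1)) := by
        rw [← Real.div_rpow ht.le hs.le, hts, Real.rpow_def_of_pos (Real.exp_pos _),
          Real.log_exp, mul_one_div]
      rw [h1, mul_div_assoc, h2]
    have hterm : ∀ p:ℕ, Real.log (k^p / M p) = (p:ℝ)*t - τ*(p:ℝ)^σ*Real.log p := by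
      intro p
      rcases Nat.eq_zero_or_pos p with h | h
      · subst h
        simp [hM0, Real.zero_rpow hσ0]
      · have hp0 : (0:ℝ) < (p:ℝ) := by exact_mod_cast h
        rw [hM p h, Real.log_div (pow_ne_zero p hk.ne') (Real.rpow_pos_of_pos hp0 _).ne',
          Real.log_pow, Real.log_rpow hp0]
    have hub : ∀ p:ℕ, max 0 (Real.log (k^p/M p)) ≤ bet σ τ * φ t := by
      intro p
      rw [hterm p, hφt]
      apply max_le
      · positivity
      · exact aux_upper σ τ hσ hτ t s ht hs hWeq p
    have hbdd : BddAbove (Set.range fun p:ℕ => max 0 (Real.log (k^p/M p))) := by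
      refine ⟨bet σ τ * φ t, ?_⟩
      rintro y ⟨p, rfl⟩
      exact hub p
    have hT0 : 0 ≤ T k := by
      rw [hT]
      exact le_trans (le_max_left 0 _) (le_ciSup hbdd 0)
    rw [hmax]
    constructor
    · -- lower bound
      rcases le_or_gt s0 s with hcase | hcase
      · obtain ⟨p, hp⟩ := aux_lower σ τ hσ hτ t s ht hs hWeq α hα0 hα1 hαpow
          (le_trans (le_max_left _ _) hcase) (le_trans (le_max_right _ _) hcase)
        have h1 : α/4 * φ t ≤ T k := by
          rw [hφt, hT]
          refine le_trans hp (le_trans ?_ (le_ciSup hbdd p))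
          rw [hterm p]
          exact le_max_right _ _
        have h2 : 0 ≤ α/4*C0 := by positivity
        linarith
      · have hφle : φ t ≤ C0 := by
          rw [hφt, hC0def]
          have h1 : t ≤ s0 * Real.exp s0 := by
            rw [← hWeq]
            exact mul_le_mul hcase.le (Real.exp_le_exp.2 hcase.le) (Real.exp_pos _).le hs0nn
          have h2 : Real.exp (s/(σ-1)) ≤ Real.exp (s0/(σ-1)) := by
            apply Real.exp_le_exp.2
            gcongr
          calc t * Real.exp (s/(σ-1))
              ≤ (s0 * Real.exp s0) * Real.exp (s0/(σ-1)) :=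
                mul_le_mul h1 h2 (Real.exp_pos _).le (by positivity)
            _ = s0 * Real.exp s0 * Real.exp (s0/(σ-1)) := by ring
        have h3 : α/4 * φ t ≤ α/4 * C0 := mul_le_mul_of_nonneg_left hφle (by positivity)
        linarith
    · -- upper bound
      rw [hT]
      have h := ciSup_le hub
      linarith
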